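/- Let 1 ≤ m ≤ n and let V₁, …, V_m be an admissible family on H = ℓ²(ℕⁿ; ℂ) (with Vᵢ a variable-i inner multiplier). Set Pⱼ := VⱼVⱼ* and Qⱼ := I − Pⱼ for 2 ≤ j ≤ m, and define T := V₁ Q₂ ⋯ Q_m + P₂ Q₃ ⋯ Q_m + ⋯ + P_{m−1} Q_m + P_m. Then T is an isometry on H, and the smallest closed subspace of H containing S₁^l(ran T) for every l ≥ 0 — that is, the closed linear span of ⋃_{l ≥ 0} S₁^l(T H) — equals ran V₁ + ran V₂ + ⋯ + ran V_m. (Thus T implements the Beurling–Lax–Halmos representing inner function of the co-doubly commuting submodule ran V₁ + ⋯ + ran V_m, viewed as a submodule of H²_{H²(𝔻^{n−1})}(𝔻).) -/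

import Mathlib

open ContinuousLinearMap

noncomputable section

/-- `ℓ²(ℕⁿ; ℂ)`, identified with the Hardy space `H²(𝔻ⁿ)` via Taylor coefficients. -/
abbrev HardyH (n : ℕ) : Type := lp (fun _ : Fin n → ℕ => ℂ) 2

/-- `T` is the `i`-th coordinate unilateral shift (multiplication by `zᵢ` on `H²(𝔻ⁿ)`):
`(T f) α = f (α − εᵢ)` if `αᵢ ≥ 1`, and `0` otherwise. -/
def IsShift (n : ℕ) (i : Fin n) (T : HardyH n →L[ℂ] HardyH n) : Prop :=
  ∀ (f : HardyH n) (α : Fin n → ℕ),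
    T f α = if 0 < α i then f (α - Pi.single i 1) else 0

/-- The standard basis vector at the zero multi-index (the constant function `1`). -/
def e₀ (n : ℕ) : HardyH n := lp.single 2 0 1

/-- `V` is a variable-`i` inner multiplier: an isometry commuting with every shift and
with the adjoints of the shifts in all the other variables (these are exactly the
multiplication operators by one-variable inner functions `Θ(zᵢ)`). -/
def IsInnerMult (n : ℕ) (i : Fin n) (Sh : Fin n → HardyH n →L[ℂ] HardyH n)
    (V : HardyH n →L[ℂ] HardyH n) : Prop :=
  adjoint V * V = 1 ∧ (∀ j, V * Sh j = Sh j * V) ∧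
    ∀ j, j ≠ i → V * adjoint (Sh j) = adjoint (Sh j) * V

/-- An admissible family: `Sh` are the coordinate shifts, each `V i` is a variable-`i`
inner multiplier, and the `V i` doubly commute with each other. -/
def IsAdmissible {n : ℕ} (Sh V : Fin n → HardyH n →L[ℂ] HardyH n) : Prop :=
  (∀ i, IsShift n i (Sh i)) ∧ (∀ i, IsInnerMult n i Sh (V i)) ∧
  (∀ i j, i ≠ j → V i * V j = V j * V i) ∧
  (∀ i j, i ≠ j → adjoint (V i) * V j = V j * adjoint (V i))

set_option maxHeartbeats 2000000 in
theorem aux_blh {n m : ℕ} (hm : 1 ≤ m)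
    (V : Fin m → HardyH n →L[ℂ] HardyH n) (S : HardyH n →L[ℂ] HardyH n)
    (hV1 : ∀ i, adjoint (V i) * V i = 1)
    (hVV : ∀ i j : Fin m, i ≠ j → V i * V j = V j * V i)
    (hVVa : ∀ i j : Fin m, i ≠ j → adjoint (V i) * V j = V j * adjoint (V i))
    (hS : ∀ i, V i * S = S * V i) :
    adjoint (V ⟨0, hm⟩ * ((List.ofFn fun j : Fin m => 1 - V j * adjoint (V j)).drop 1).prod
        + ∑ j ∈ Finset.univ.filter (fun j : Fin m => 0 < j.val),
            (V j * adjoint (V j))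
              * ((List.ofFn fun k : Fin m => 1 - V k * adjoint (V k)).drop (j.val + 1)).prod)
      * (V ⟨0, hm⟩ * ((List.ofFn fun j : Fin m => 1 - V j * adjoint (V j)).drop 1).prod
        + ∑ j ∈ Finset.univ.filter (fun j : Fin m => 0 < j.val),
            (V j * adjoint (V j))
              * ((List.ofFn fun k : Fin m => 1 - V k * adjoint (V k)).drop (j.val + 1)).prod)
      = 1 ∧
    (⨆ l : ℕ, LinearMap.range
        (((S ^ l
          * (V ⟨0, hm⟩ * ((List.ofFn fun j : Fin m => 1 - V j * adjoint (V j)).drop 1).prod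
            + ∑ j ∈ Finset.univ.filter (fun j : Fin m => 0 < j.val),
                (V j * adjoint (V j))
                  * ((List.ofFn fun k : Fin m => 1 - V k * adjoint (V k)).drop (j.val + 1)).prod)
          : HardyH n →L[ℂ] HardyH n) : HardyH n →ₗ[ℂ] HardyH n))
      : Submodule ℂ (HardyH n)).topologicalClosure
      = ∑ i, LinearMap.range (V i : HardyH n →ₗ[ℂ] HardyH n) := by
  classical
  set Q : Fin m → (HardyH n →L[ℂ] HardyH n) :=
    fun j : Fin m => 1 - V j * adjoint (V j) with hQ
  have hQj : ∀ j, Q j = 1 - V j * adjoint (V j) := fun _ => rfl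
  set L : List (HardyH n →L[ℂ] HardyH n) := List.ofFn Q with hL
  set i0 : Fin m := ⟨0, hm⟩ with hi0
  set F : Finset (Fin m) := Finset.univ.filter (fun j : Fin m => 0 < j.val) with hF
  set T : HardyH n →L[ℂ] HardyH n :=
    V i0 * (L.drop 1).prod
      + ∑ j ∈ F, (V j * adjoint (V j)) * (L.drop (j.val + 1)).prod with hTdef
  -- ## basic star algebra
  have hadjmul : ∀ A B : HardyH n →L[ℂ] HardyH n, adjoint (A * B) = adjoint B * adjoint A := by
    intro A B; rw [← star_eq_adjoint, ← star_eq_adjoint, ← star_eq_adjoint, star_mul]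
  have hadjone : adjoint (1 : HardyH n →L[ℂ] HardyH n) = 1 := by
    rw [← star_eq_adjoint, star_one]
  have hadjzero : adjoint (0 : HardyH n →L[ℂ] HardyH n) = 0 := by
    rw [← star_eq_adjoint, star_zero]
  have hVV' : ∀ i j : Fin m, V i * V j = V j * V i := by
    intro i j; rcases eq_or_ne i j with rfl | h
    · rfl
    · exact hVV i j h
  have hVaVa : ∀ i j : Fin m, adjoint (V i) * adjoint (V j) = adjoint (V j) * adjoint (V i) := by
    intro i j; rw [← hadjmul, ← hadjmul, hVV']
  have hVVa' : ∀ i j : Fin m, i ≠ j → V i * adjoint (V j) = adjoint (V j) * V i := by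
    intro i j h; exact (hVVa j i h.symm).symm
  have hVP : ∀ i j : Fin m, i ≠ j →
      V i * (V j * adjoint (V j)) = (V j * adjoint (V j)) * V i := by
    intro i j h
    calc V i * (V j * adjoint (V j)) = (V i * V j) * adjoint (V j) := (mul_assoc _ _ _).symm
      _ = (V j * V i) * adjoint (V j) := by rw [hVV i j h]
      _ = V j * (V i * adjoint (V j)) := mul_assoc _ _ _
      _ = V j * (adjoint (V j) * V i) := by rw [hVVa' i j h]
      _ = (V j * adjoint (V j)) * V i := (mul_assoc _ _ _).symm
  have hVaP : ∀ i j : Fin m, i ≠ j →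
      adjoint (V i) * (V j * adjoint (V j)) = (V j * adjoint (V j)) * adjoint (V i) := by
    intro i j h
    calc adjoint (V i) * (V j * adjoint (V j))
        = (adjoint (V i) * V j) * adjoint (V j) := (mul_assoc _ _ _).symm
      _ = (V j * adjoint (V i)) * adjoint (V j) := by rw [hVVa i j h]
      _ = V j * (adjoint (V i) * adjoint (V j)) := mul_assoc _ _ _
      _ = V j * (adjoint (V j) * adjoint (V i)) := by rw [hVaVa i j]
      _ = (V j * adjoint (V j)) * adjoint (V i) := (mul_assoc _ _ _).symm
  have hPidem : ∀ j, (V j * adjoint (V j)) * (V j * adjoint (V j)) = V j * adjoint (V j) := by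
    intro j
    conv_lhs => rw [mul_assoc, ← mul_assoc (adjoint (V j)), hV1 j, one_mul]
  have hPP : ∀ i j : Fin m,
      (V i * adjoint (V i)) * (V j * adjoint (V j))
        = (V j * adjoint (V j)) * (V i * adjoint (V i)) := by
    intro i j
    rcases eq_or_ne i j with rfl | h
    · rfl
    · calc (V i * adjoint (V i)) * (V j * adjoint (V j))
          = V i * (adjoint (V i) * (V j * adjoint (V j))) := mul_assoc _ _ _
        _ = V i * ((V j * adjoint (V j)) * adjoint (V i)) := by rw [hVaP i j h]
        _ = (V i * (V j * adjoint (V j))) * adjoint (V i) := (mul_assoc _ _ _).symm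
        _ = ((V j * adjoint (V j)) * V i) * adjoint (V i) := by rw [hVP i j h]
        _ = (V j * adjoint (V j)) * (V i * adjoint (V i)) := mul_assoc _ _ _
  have hQV : ∀ j, Q j * V j = 0 := by
    intro j
    rw [hQj, sub_mul, one_mul, mul_assoc, hV1 j, mul_one, sub_self]
  have hVaQ0 : ∀ j, adjoint (V j) * Q j = 0 := by
    intro j
    rw [hQj, mul_sub, mul_one, ← mul_assoc, hV1 j, one_mul, sub_self]
  have hPQ : ∀ i j : Fin m, (V i * adjoint (V i)) * Q j = Q j * (V i * adjoint (V i)) := by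
    intro i j
    rw [hQj, mul_sub, sub_mul, mul_one, one_mul, hPP i j]
  have hVQc : ∀ i j : Fin m, i ≠ j → V i * Q j = Q j * V i := by
    intro i j h; rw [hQj, mul_sub, sub_mul, mul_one, one_mul, hVP i j h]
  have hVaQc : ∀ i j : Fin m, i ≠ j → adjoint (V i) * Q j = Q j * adjoint (V i) := by
    intro i j h; rw [hQj, mul_sub, sub_mul, mul_one, one_mul, hVaP i j h]
  have hQQ : ∀ i j : Fin m, Q i * Q j = Q j * Q i := by
    intro i j
    have l1 : Q i * Q j = Q j - (V i * adjoint (V i)) * Q j := by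
      rw [hQj i, sub_mul, one_mul]
    have l2 : Q j * Q i = Q j - Q j * (V i * adjoint (V i)) := by
      rw [hQj i, mul_sub, mul_one]
    rw [l1, l2, hPQ i j]
  have hQidem : ∀ j, Q j * Q j = Q j := by
    intro j
    rw [hQj, sub_mul, one_mul, mul_sub, mul_one, hPidem, sub_self, sub_zero]
  have hQsa : ∀ j, adjoint (Q j) = Q j := by
    intro j
    rw [hQj, ← star_eq_adjoint, star_sub, star_one, star_mul, star_eq_adjoint,
      star_eq_adjoint, adjoint_adjoint]
  have hPsa : ∀ j, adjoint (V j * adjoint (V j)) = V j * adjoint (V j) := by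
    intro j; rw [hadjmul, adjoint_adjoint]
  -- ## list products
  have hLlen : L.length = m := by rw [hL]; exact List.length_ofFn
  have hmem_drop : ∀ (k : ℕ) (x), x ∈ L.drop k → ∃ j : Fin m, k ≤ j.val ∧ x = Q j := by
    intro k x hx
    rw [List.mem_iff_getElem] at hx
    obtain ⟨i, hi, rfl⟩ := hx
    have hlen : (L.drop k).length = m - k := by rw [List.length_drop, hLlen]
    have hkm : k + i < m := by omega
    refine ⟨⟨k + i, hkm⟩, Nat.le_add_right k i, ?_⟩
    rw [List.getElem_drop]
    simp [hL, List.getElem_ofFn]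
  have hcommD : ∀ (X : HardyH n →L[ℂ] HardyH n) (k : ℕ),
      (∀ j : Fin m, k ≤ j.val → X * Q j = Q j * X) →
        X * (L.drop k).prod = (L.drop k).prod * X := by
    intro X k hX
    refine (Commute.list_prod_right _ _ fun x hx => ?_).eq
    obtain ⟨j, hj, rfl⟩ := hmem_drop k x hx
    exact hX j hj
  have hDD : ∀ a b : ℕ, (L.drop a).prod * (L.drop b).prod
      = (L.drop b).prod * (L.drop a).prod := by
    intro a b
    exact hcommD ((L.drop a).prod) b (fun j _ => (hcommD (Q j) a (fun i _ => hQQ j i)).symm)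
  have hDrec : ∀ (k : ℕ) (hk : k < m),
      (L.drop k).prod = Q ⟨k, hk⟩ * (L.drop (k + 1)).prod := by
    intro k hk
    rw [List.drop_eq_getElem_cons (by rw [hLlen]; exact hk), List.prod_cons]
    congr 1
    simp [hL, List.getElem_ofFn]
  have hDone : ∀ k : ℕ, m ≤ k → (L.drop k).prod = 1 := by
    intro k hk
    rw [List.drop_eq_nil_of_le (by rw [hLlen]; exact hk), List.prod_nil]
  have hDidem : ∀ k : ℕ, (L.drop k).prod * (L.drop k).prod = (L.drop k).prod := by
    have key : ∀ t k, m ≤ k + t → (L.drop k).prod * (L.drop k).prod = (L.drop k).prod := by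
      intro t
      induction t with
      | zero => intro k hk; rw [hDone k (by omega), one_mul]
      | succ t ih =>
        intro k hk
        rcases le_or_gt m k with h | h
        · rw [hDone k h, one_mul]
        · have c := hcommD (Q ⟨k, h⟩) (k + 1) (fun i _ => hQQ _ i)
          rw [hDrec k h, mul_assoc, ← mul_assoc ((L.drop (k + 1)).prod), ← c,
            mul_assoc (Q ⟨k, h⟩) ((L.drop (k + 1)).prod), ih (k + 1) (by omega),
            ← mul_assoc, hQidem]
    intro k; exact key m k (by omega)
  have hDsa : ∀ k : ℕ, adjoint ((L.drop k).prod) = (L.drop k).prod := by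
    have key : ∀ t k, m ≤ k + t → adjoint ((L.drop k).prod) = (L.drop k).prod := by
      intro t
      induction t with
      | zero => intro k hk; rw [hDone k (by omega), hadjone]
      | succ t ih =>
        intro k hk
        rcases le_or_gt m k with h | h
        · rw [hDone k h, hadjone]
        · have c := hcommD (Q ⟨k, h⟩) (k + 1) (fun i _ => hQQ _ i)
          rw [hDrec k h, hadjmul, ih (k + 1) (by omega), hQsa, ← c]
    intro k; exact key m k (by omega)
  have hkill : ∀ (t k : ℕ) (j : Fin m), j.val = k + t → (L.drop k).prod * V j = 0 := by
    intro t
    induction t with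
    | zero =>
      intro k j hj
      have hjm := j.isLt
      have hk : k < m := by omega
      have hkj : (⟨k, hk⟩ : Fin m) = j := by
        apply Fin.ext; simp; omega
      have c : V j * (L.drop (k + 1)).prod = (L.drop (k + 1)).prod * V j :=
        hcommD (V j) (k + 1) (fun i hi => hVQc j i (Fin.ne_of_val_ne (by omega)))
      rw [hDrec k hk, hkj, mul_assoc, ← c, ← mul_assoc, hQV j, zero_mul]
    | succ t ih =>
      intro k j hj
      have hjm := j.isLt
      have hk : k < m := by omega
      rw [hDrec k hk, mul_assoc, ih (k + 1) j (by omega), mul_zero]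
  have hkillDP : ∀ (k : ℕ) (j : Fin m), k ≤ j.val →
      (L.drop k).prod * (V j * adjoint (V j)) = 0 := by
    intro k j h
    rw [← mul_assoc, hkill (j.val - k) k j (by omega), zero_mul]
  have hkillPD : ∀ (j : Fin m) (k : ℕ), k ≤ j.val →
      (V j * adjoint (V j)) * (L.drop k).prod = 0 := by
    intro j k h
    have h2 := congrArg adjoint (hkillDP k j h)
    rwa [hadjmul, hPsa, hDsa, hadjzero] at h2
  -- ## telescoping
  have htel : ∀ t k : ℕ, k + t = m →
      (L.drop k).prod + ∑ j ∈ Finset.univ.filter (fun j : Fin m => k ≤ j.val),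
        (V j * adjoint (V j)) * (L.drop (j.val + 1)).prod = 1 := by
    intro t
    induction t with
    | zero =>
      intro k hk
      have h2 : Finset.univ.filter (fun j : Fin m => k ≤ j.val) = ∅ := by
        ext j; simp only [Finset.mem_filter, Finset.mem_univ, true_and,
          Finset.notMem_empty, iff_false]
        have := j.isLt; omega
      rw [hDone k (by omega), h2, Finset.sum_empty, add_zero]
    | succ t ih =>
      intro k hk
      have hkm : k < m := by omega
      have hfilter : Finset.univ.filter (fun j : Fin m => k ≤ j.val)
          = insert ⟨k, hkm⟩ (Finset.univ.filter (fun j : Fin m => k + 1 ≤ j.val)) := by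
        ext j
        simp only [Finset.mem_filter, Finset.mem_univ, true_and, Finset.mem_insert, Fin.ext_iff]
        omega
      have hnot : (⟨k, hkm⟩ : Fin m) ∉ Finset.univ.filter (fun j : Fin m => k + 1 ≤ j.val) := by
        simp
      rw [hfilter, Finset.sum_insert hnot, ← add_assoc]
      have hstep : (L.drop k).prod
          + (V ⟨k, hkm⟩ * adjoint (V ⟨k, hkm⟩)) * (L.drop ((⟨k, hkm⟩ : Fin m).val + 1)).prod
          = (L.drop (k + 1)).prod := by
        show (L.drop k).prod
          + (V ⟨k, hkm⟩ * adjoint (V ⟨k, hkm⟩)) * (L.drop (k + 1)).prod = (L.drop (k + 1)).prod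
        rw [hDrec k hkm, ← add_mul, hQj, sub_add_cancel, one_mul]
      rw [hstep]
      exact ih (k + 1) (by omega)
  have hi0val : (i0 : Fin m).val = 0 := rfl
  -- ## adjoint of T
  have hadjT : adjoint T = (L.drop 1).prod * adjoint (V i0)
      + ∑ j ∈ F, (V j * adjoint (V j)) * (L.drop (j.val + 1)).prod := by
    rw [hTdef, ← star_eq_adjoint, star_add, star_sum]
    congr 1
    · rw [star_eq_adjoint, hadjmul, hDsa]
    · refine Finset.sum_congr rfl fun j hj => ?_
      rw [star_eq_adjoint, hadjmul, hDsa, hPsa]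
      exact (hcommD _ (j.val + 1) (fun i _ => hPQ j i)).symm
  -- ## diagonal terms of the sum
  have hBidem : ∀ j : Fin m,
      ((V j * adjoint (V j)) * (L.drop (j.val + 1)).prod)
        * ((V j * adjoint (V j)) * (L.drop (j.val + 1)).prod)
      = (V j * adjoint (V j)) * (L.drop (j.val + 1)).prod := by
    intro j
    have c : (V j * adjoint (V j)) * (L.drop (j.val + 1)).prod
        = (L.drop (j.val + 1)).prod * (V j * adjoint (V j)) :=
      hcommD _ _ (fun i _ => hPQ j i)
    calc ((V j * adjoint (V j)) * (L.drop (j.val + 1)).prod)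
          * ((V j * adjoint (V j)) * (L.drop (j.val + 1)).prod)
        = (V j * adjoint (V j))
            * (((L.drop (j.val + 1)).prod * (V j * adjoint (V j))) * (L.drop (j.val + 1)).prod) := by
          noncomm_ring
      _ = (V j * adjoint (V j))
            * (((V j * adjoint (V j)) * (L.drop (j.val + 1)).prod) * (L.drop (j.val + 1)).prod) := by
          rw [← c]
      _ = ((V j * adjoint (V j)) * (V j * adjoint (V j)))
            * ((L.drop (j.val + 1)).prod * (L.drop (j.val + 1)).prod) := by noncomm_ring
      _ = (V j * adjoint (V j)) * (L.drop (j.val + 1)).prod := by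
          rw [hPidem j, hDidem]
  have hBB : ∀ j k : Fin m, j ≠ k →
      ((V j * adjoint (V j)) * (L.drop (j.val + 1)).prod)
        * ((V k * adjoint (V k)) * (L.drop (k.val + 1)).prod) = 0 := by
    intro j k hjk
    rcases Nat.lt_or_ge j.val k.val with h | h
    · calc ((V j * adjoint (V j)) * (L.drop (j.val + 1)).prod)
            * ((V k * adjoint (V k)) * (L.drop (k.val + 1)).prod)
          = (V j * adjoint (V j)) * (((L.drop (j.val + 1)).prod * (V k * adjoint (V k)))
              * (L.drop (k.val + 1)).prod) := by noncomm_ring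
        _ = 0 := by rw [hkillDP (j.val + 1) k (by omega), zero_mul, mul_zero]
    · have h' : k.val < j.val := by
        have : j.val ≠ k.val := fun e => hjk (Fin.ext e)
        omega
      have c1 : (V k * adjoint (V k)) * (L.drop (j.val + 1)).prod
          = (L.drop (j.val + 1)).prod * (V k * adjoint (V k)) :=
        hcommD _ _ (fun i _ => hPQ k i)
      calc ((V j * adjoint (V j)) * (L.drop (j.val + 1)).prod)
            * ((V k * adjoint (V k)) * (L.drop (k.val + 1)).prod)
          = (V j * adjoint (V j)) * (((L.drop (j.val + 1)).prod * (V k * adjoint (V k)))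
              * (L.drop (k.val + 1)).prod) := by noncomm_ring
        _ = (V j * adjoint (V j)) * (((V k * adjoint (V k)) * (L.drop (j.val + 1)).prod)
              * (L.drop (k.val + 1)).prod) := by rw [← c1]
        _ = ((V j * adjoint (V j)) * (V k * adjoint (V k)))
              * ((L.drop (j.val + 1)).prod * (L.drop (k.val + 1)).prod) := by noncomm_ring
        _ = ((V k * adjoint (V k)) * (V j * adjoint (V j)))
              * ((L.drop (k.val + 1)).prod * (L.drop (j.val + 1)).prod) := by
            rw [hPP j k, hDD (j.val + 1) (k.val + 1)]
        _ = (V k * adjoint (V k)) * (((V j * adjoint (V j)) * (L.drop (k.val + 1)).prod)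
              * (L.drop (j.val + 1)).prod) := by noncomm_ring
        _ = 0 := by rw [hkillPD j (k.val + 1) (by omega), zero_mul, mul_zero]
  have h22 : (∑ j ∈ F, (V j * adjoint (V j)) * (L.drop (j.val + 1)).prod)
      * (∑ j ∈ F, (V j * adjoint (V j)) * (L.drop (j.val + 1)).prod)
      = ∑ j ∈ F, (V j * adjoint (V j)) * (L.drop (j.val + 1)).prod := by
    rw [Finset.sum_mul]
    refine Finset.sum_congr rfl fun j hj => ?_
    rw [Finset.mul_sum, Finset.sum_eq_single_of_mem j hj
      (fun k hk hkj => hBB j k (Ne.symm hkj))]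
    exact hBidem j
  -- ## T is an isometry
  have hT1 : adjoint T * T = 1 := by
    rw [hadjT, hTdef, add_mul, mul_add, mul_add]
    have h11 : ((L.drop 1).prod * adjoint (V i0)) * (V i0 * (L.drop 1).prod)
        = (L.drop 1).prod := by
      calc ((L.drop 1).prod * adjoint (V i0)) * (V i0 * (L.drop 1).prod)
          = (L.drop 1).prod * ((adjoint (V i0) * V i0) * (L.drop 1).prod) := by noncomm_ring
        _ = (L.drop 1).prod * (1 * (L.drop 1).prod) := by rw [hV1 i0]
        _ = (L.drop 1).prod := by rw [one_mul, hDidem 1]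
    have h12 : ((L.drop 1).prod * adjoint (V i0))
        * (∑ j ∈ F, (V j * adjoint (V j)) * (L.drop (j.val + 1)).prod) = 0 := by
      rw [Finset.mul_sum]
      refine Finset.sum_eq_zero fun j hj => ?_
      have hjv : 0 < j.val := by rw [hF] at hj; exact (Finset.mem_filter.1 hj).2
      have hne : i0 ≠ j := Fin.ne_of_val_ne (by omega)
      calc ((L.drop 1).prod * adjoint (V i0))
            * ((V j * adjoint (V j)) * (L.drop (j.val + 1)).prod)
          = (L.drop 1).prod * ((adjoint (V i0) * (V j * adjoint (V j)))
              * (L.drop (j.val + 1)).prod) := by noncomm_ring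
        _ = (L.drop 1).prod * (((V j * adjoint (V j)) * adjoint (V i0))
              * (L.drop (j.val + 1)).prod) := by rw [hVaP i0 j hne]
        _ = ((L.drop 1).prod * (V j * adjoint (V j)))
              * (adjoint (V i0) * (L.drop (j.val + 1)).prod) := by noncomm_ring
        _ = 0 := by rw [hkillDP 1 j (by omega), zero_mul]
    have h21 : (∑ j ∈ F, (V j * adjoint (V j)) * (L.drop (j.val + 1)).prod)
        * (V i0 * (L.drop 1).prod) = 0 := by
      rw [Finset.sum_mul]
      refine Finset.sum_eq_zero fun j hj => ?_
      have hjv : 0 < j.val := by rw [hF] at hj; exact (Finset.mem_filter.1 hj).2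
      have hne : i0 ≠ j := Fin.ne_of_val_ne (by omega)
      have c1 : V i0 * (L.drop (j.val + 1)).prod = (L.drop (j.val + 1)).prod * V i0 :=
        hcommD (V i0) _ (fun i hi => hVQc i0 i (Fin.ne_of_val_ne (by omega)))
      calc ((V j * adjoint (V j)) * (L.drop (j.val + 1)).prod) * (V i0 * (L.drop 1).prod)
          = (V j * adjoint (V j)) * (((L.drop (j.val + 1)).prod * V i0) * (L.drop 1).prod) := by
            noncomm_ring
        _ = (V j * adjoint (V j)) * ((V i0 * (L.drop (j.val + 1)).prod) * (L.drop 1).prod) := by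
            rw [← c1]
        _ = ((V j * adjoint (V j)) * V i0) * ((L.drop (j.val + 1)).prod * (L.drop 1).prod) := by
            noncomm_ring
        _ = (V i0 * (V j * adjoint (V j))) * ((L.drop (j.val + 1)).prod * (L.drop 1).prod) := by
            rw [← hVP i0 j hne]
        _ = (V i0 * (V j * adjoint (V j))) * ((L.drop 1).prod * (L.drop (j.val + 1)).prod) := by
            rw [hDD (j.val + 1) 1]
        _ = V i0 * (((V j * adjoint (V j)) * (L.drop 1).prod) * (L.drop (j.val + 1)).prod) := by
            noncomm_ring
        _ = 0 := by rw [hkillPD j 1 (by omega), zero_mul, mul_zero]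
    rw [h11, h12, h21, h22, add_zero, zero_add]
    have hF1 : F = Finset.univ.filter (fun j : Fin m => 1 ≤ j.val) := by
      rw [hF]; ext j
      simp only [Finset.mem_filter, Finset.mem_univ, true_and]
      omega
    rw [hF1]
    exact htel (m - 1) 1 (by omega)
  -- ## T T* is the projection onto the sum of the ranges
  have hTT : T * adjoint T = 1 - (L.drop 0).prod := by
    rw [hadjT, hTdef, add_mul, mul_add, mul_add]
    have k11 : (V i0 * (L.drop 1).prod) * ((L.drop 1).prod * adjoint (V i0))
        = (V i0 * adjoint (V i0)) * (L.drop ((i0 : Fin m).val + 1)).prod := by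
      have c : adjoint (V i0) * (L.drop 1).prod = (L.drop 1).prod * adjoint (V i0) :=
        hcommD _ 1 (fun i hi => hVaQc i0 i (Fin.ne_of_val_ne (by omega)))
      calc (V i0 * (L.drop 1).prod) * ((L.drop 1).prod * adjoint (V i0))
          = V i0 * (((L.drop 1).prod * (L.drop 1).prod) * adjoint (V i0)) := by noncomm_ring
        _ = V i0 * ((L.drop 1).prod * adjoint (V i0)) := by rw [hDidem 1]
        _ = V i0 * (adjoint (V i0) * (L.drop 1).prod) := by rw [← c]
        _ = (V i0 * adjoint (V i0)) * (L.drop 1).prod := by noncomm_ring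
        _ = (V i0 * adjoint (V i0)) * (L.drop ((i0 : Fin m).val + 1)).prod := rfl
    have k12 : (V i0 * (L.drop 1).prod)
        * (∑ j ∈ F, (V j * adjoint (V j)) * (L.drop (j.val + 1)).prod) = 0 := by
      rw [Finset.mul_sum]
      refine Finset.sum_eq_zero fun j hj => ?_
      have hjv : 0 < j.val := by rw [hF] at hj; exact (Finset.mem_filter.1 hj).2
      calc (V i0 * (L.drop 1).prod) * ((V j * adjoint (V j)) * (L.drop (j.val + 1)).prod)
          = V i0 * (((L.drop 1).prod * (V j * adjoint (V j))) * (L.drop (j.val + 1)).prod) := by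
            noncomm_ring
        _ = 0 := by rw [hkillDP 1 j (by omega), zero_mul, mul_zero]
    have k21 : (∑ j ∈ F, (V j * adjoint (V j)) * (L.drop (j.val + 1)).prod)
        * ((L.drop 1).prod * adjoint (V i0)) = 0 := by
      rw [Finset.sum_mul]
      refine Finset.sum_eq_zero fun j hj => ?_
      have hjv : 0 < j.val := by rw [hF] at hj; exact (Finset.mem_filter.1 hj).2
      calc ((V j * adjoint (V j)) * (L.drop (j.val + 1)).prod)
            * ((L.drop 1).prod * adjoint (V i0))
          = (V j * adjoint (V j)) * (((L.drop (j.val + 1)).prod * (L.drop 1).prod)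
              * adjoint (V i0)) := by noncomm_ring
        _ = (V j * adjoint (V j)) * (((L.drop 1).prod * (L.drop (j.val + 1)).prod)
              * adjoint (V i0)) := by rw [hDD (j.val + 1) 1]
        _ = ((V j * adjoint (V j)) * (L.drop 1).prod)
              * ((L.drop (j.val + 1)).prod * adjoint (V i0)) := by noncomm_ring
        _ = 0 := by rw [hkillPD j 1 (by omega), zero_mul]
    rw [k11, k12, k21, h22, add_zero, zero_add]
    have huniv : (Finset.univ : Finset (Fin m)) = insert i0 F := by
      rw [hF]; ext j
      simp only [Finset.mem_univ, true_iff, Finset.mem_insert, Finset.mem_filter,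
        true_and, hi0, Fin.ext_iff]
      omega
    have hnotF : i0 ∉ F := by rw [hF]; simp [hi0]
    have h0 := htel m 0 (by omega)
    have hF0 : Finset.univ.filter (fun j : Fin m => 0 ≤ j.val) = Finset.univ := by
      apply Finset.filter_true_of_mem; intro j _; exact Nat.zero_le _
    rw [hF0, huniv, Finset.sum_insert hnotF] at h0
    simp only [add_zero, zero_add]
    rw [eq_sub_iff_add_eq, add_comm]
    simpa only [hi0val, zero_add] using h0
  refine ⟨hT1, ?_⟩
  -- ## identification of the invariant subspace
  have hle_sum : ∀ (p : Submodule ℂ (HardyH n)),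
      (∀ i, LinearMap.range (V i : HardyH n →ₗ[ℂ] HardyH n) ≤ p) →
        (∑ i, LinearMap.range (V i : HardyH n →ₗ[ℂ] HardyH n) : Submodule ℂ (HardyH n)) ≤ p := by
    intro p hp
    refine Finset.sum_induction _ (fun q => q ≤ p) (fun a b ha hb => ?_) ?_ (fun i _ => hp i)
    · rw [Submodule.add_eq_sup]; exact sup_le ha hb
    · rw [Submodule.zero_eq_bot]; exact bot_le
  have hle_M : ∀ i, LinearMap.range (V i : HardyH n →ₗ[ℂ] HardyH n)
      ≤ (∑ i, LinearMap.range (V i : HardyH n →ₗ[ℂ] HardyH n) : Submodule ℂ (HardyH n)) := by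
    intro i
    have h1 := Finset.add_sum_erase Finset.univ
      (fun i => (LinearMap.range (V i : HardyH n →ₗ[ℂ] HardyH n) : Submodule ℂ (HardyH n))) (Finset.mem_univ i)
    rw [← h1, Submodule.add_eq_sup]
    exact le_sup_left
  have hkerM : ∀ (i : Fin m) (y : HardyH n), (L.drop 0).prod (V i y) = 0 := by
    intro i y
    have h1 : (L.drop 0).prod * V i = 0 := hkill i.val 0 i (by omega)
    calc (L.drop 0).prod (V i y) = ((L.drop 0).prod * V i) y := (ContinuousLinearMap.mul_apply _ _ _).symm
      _ = 0 := by rw [h1]; exact ContinuousLinearMap.zero_apply y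
  have hMmem0 : ∀ x ∈ (∑ i, LinearMap.range (V i : HardyH n →ₗ[ℂ] HardyH n) : Submodule ℂ (HardyH n)),
      (L.drop 0).prod x = 0 := by
    have h2 : (∑ i, LinearMap.range (V i : HardyH n →ₗ[ℂ] HardyH n) : Submodule ℂ (HardyH n))
        ≤ LinearMap.ker ((L.drop 0).prod : HardyH n →ₗ[ℂ] HardyH n) := by
      apply hle_sum
      intro i
      rintro x ⟨y, rfl⟩
      exact LinearMap.mem_ker.2 (hkerM i y)
    intro x hx
    exact LinearMap.mem_ker.1 (h2 hx)
  have hTx : ∀ x, T x ∈ (∑ i, LinearMap.range (V i : HardyH n →ₗ[ℂ] HardyH n) : Submodule ℂ (HardyH n)) := by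
    intro x
    have hTx' : T x = V i0 ((L.drop 1).prod x)
        + ∑ j ∈ F, V j ((adjoint (V j) * (L.drop (j.val + 1)).prod) x) := by
      rw [hTdef]
      rw [ContinuousLinearMap.add_apply, ContinuousLinearMap.sum_apply, ContinuousLinearMap.mul_apply]
      have hs : ∀ j ∈ F, ((V j * adjoint (V j)) * (L.drop (j.val + 1)).prod) x
          = V j ((adjoint (V j) * (L.drop (j.val + 1)).prod) x) := by
        intro j hj
        rw [show (V j * adjoint (V j)) * (L.drop (j.val + 1)).prod
            = V j * (adjoint (V j) * (L.drop (j.val + 1)).prod) from mul_assoc _ _ _,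
          ContinuousLinearMap.mul_apply]
      rw [Finset.sum_congr rfl hs]
    rw [hTx']
    exact Submodule.add_mem _ (hle_M i0 ⟨_, rfl⟩)
      (Submodule.sum_mem _ fun j hj => hle_M j ⟨_, rfl⟩)
  have hSmem : ∀ x ∈ (∑ i, LinearMap.range (V i : HardyH n →ₗ[ℂ] HardyH n) : Submodule ℂ (HardyH n)),
      S x ∈ (∑ i, LinearMap.range (V i : HardyH n →ₗ[ℂ] HardyH n) : Submodule ℂ (HardyH n)) := by
    have h2 : (∑ i, LinearMap.range (V i : HardyH n →ₗ[ℂ] HardyH n) : Submodule ℂ (HardyH n))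
        ≤ Submodule.comap (S : HardyH n →ₗ[ℂ] HardyH n)
            (∑ i, LinearMap.range (V i : HardyH n →ₗ[ℂ] HardyH n) : Submodule ℂ (HardyH n)) := by
      apply hle_sum
      intro i
      rintro x ⟨y, rfl⟩
      refine Submodule.mem_comap.2 ?_
      have h3 : S (V i y) = V i (S y) := by
        have h4 := congrArg (fun A : HardyH n →L[ℂ] HardyH n => A y) (hS i)
        simp only [ContinuousLinearMap.mul_apply] at h4
        exact h4.symm
      have h5 : (S : HardyH n →ₗ[ℂ] HardyH n) (V i y) = S (V i y) := rfl
      change S (V i y) ∈ _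
      rw [h3]
      exact hle_M i ⟨S y, rfl⟩
    intro x hx
    exact Submodule.mem_comap.1 (h2 hx)
  have hSpow : ∀ (l : ℕ), ∀ x ∈ (∑ i, LinearMap.range (V i : HardyH n →ₗ[ℂ] HardyH n) : Submodule ℂ (HardyH n)),
      (S ^ l) x ∈ (∑ i, LinearMap.range (V i : HardyH n →ₗ[ℂ] HardyH n) : Submodule ℂ (HardyH n)) := by
    intro l
    induction l with
    | zero => intro x hx; simpa [pow_zero, ContinuousLinearMap.one_apply] using hx
    | succ l ih =>
      intro x hx
      rw [pow_succ, ContinuousLinearMap.mul_apply]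
      exact ih _ (hSmem x hx)
  have hranT : ∀ x ∈ (∑ i, LinearMap.range (V i : HardyH n →ₗ[ℂ] HardyH n) : Submodule ℂ (HardyH n)),
      T (adjoint T x) = x := by
    intro x hx
    have h4 := congrArg (fun A : HardyH n →L[ℂ] HardyH n => A x) hTT
    simp only [ContinuousLinearMap.mul_apply, ContinuousLinearMap.sub_apply, ContinuousLinearMap.one_apply] at h4
    rw [h4, hMmem0 x hx, sub_zero]
  have hsup : (⨆ l : ℕ, LinearMap.range ((S ^ l * T : HardyH n →L[ℂ] HardyH n) : HardyH n →ₗ[ℂ] HardyH n) : Submodule ℂ (HardyH n))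
      = ∑ i, LinearMap.range (V i : HardyH n →ₗ[ℂ] HardyH n) := by
    apply le_antisymm
    · refine iSup_le fun l => ?_
      rintro x ⟨y, rfl⟩
      change (S ^ l * T) y ∈ _
      rw [ContinuousLinearMap.mul_apply]
      exact hSpow l (T y) (hTx y)
    · intro x hx
      have hx1 : x ∈ LinearMap.range ((S ^ 0 * T : HardyH n →L[ℂ] HardyH n) : HardyH n →ₗ[ℂ] HardyH n) := by
        refine ⟨adjoint T x, ?_⟩
        rw [pow_zero, one_mul]
        exact hranT x hx
      exact le_iSup (fun l => (LinearMap.range ((S ^ l * T : HardyH n →L[ℂ] HardyH n) : HardyH n →ₗ[ℂ] HardyH n) : Submodule ℂ (HardyH n))) 0 hx1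
  rw [hsup]
  apply IsClosed.submodule_topologicalClosure_eq
  have hMk : (∑ i, LinearMap.range (V i : HardyH n →ₗ[ℂ] HardyH n) : Submodule ℂ (HardyH n))
      = LinearMap.ker ((L.drop 0).prod : HardyH n →ₗ[ℂ] HardyH n) := by
    apply le_antisymm
    · apply hle_sum
      intro i
      rintro x ⟨y, rfl⟩
      exact LinearMap.mem_ker.2 (hkerM i y)
    · intro x hx
      have hx0 : (L.drop 0).prod x = 0 := LinearMap.mem_ker.1 hx
      have h4 := congrArg (fun A : HardyH n →L[ℂ] HardyH n => A x) hTT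
      simp only [ContinuousLinearMap.mul_apply, ContinuousLinearMap.sub_apply, ContinuousLinearMap.one_apply] at h4
      have h5 : T (adjoint T x) = x := by rw [h4, hx0, sub_zero]
      have h6 := hTx (adjoint T x)
      rwa [h5] at h6
  rw [hMk]
  exact ContinuousLinearMap.isClosed_ker _

/-- Let `1 ≤ m ≤ n` and let `V₁, …, V_m` be an admissible family (`Vᵢ` a
variable-`i` inner multiplier).  With `Pⱼ = VⱼVⱼ*` and `Qⱼ = I − Pⱼ`, the operator
`T = V₁ Q₂⋯Q_m + P₂ Q₃⋯Q_m + ⋯ + P_{m−1} Q_m + P_m`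
is an isometry on `H`, and the smallest closed subspace containing `S₁ˡ (ran T)` for all
`l ≥ 0` — the topological closure of `⨆ l, ran (S₁ˡ T)` — equals `ran V₁ + ⋯ + ran V_m`.
Thus `T` implements the Beurling–Lax–Halmos representing inner function of this co-doubly
commuting submodule viewed inside `H²_{H²(𝔻^{n−1})}(𝔻)`. -/
theorem blh_inner_function_of_co_doubly_commuting
    {n m : ℕ} (hm : 1 ≤ m) (hmn : m ≤ n)
    (Sh : Fin n → HardyH n →L[ℂ] HardyH n) (hSh : ∀ i, IsShift n i (Sh i))
    (V : Fin m → HardyH n →L[ℂ] HardyH n)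
    (hV : ∀ i : Fin m, IsInnerMult n (Fin.castLE hmn i) Sh (V i))
    (hVV : ∀ i j : Fin m, i ≠ j → V i * V j = V j * V i)
    (hVVa : ∀ i j : Fin m, i ≠ j → adjoint (V i) * V j = V j * adjoint (V i)) :
    adjoint (V ⟨0, hm⟩ * ((List.ofFn fun j : Fin m => 1 - V j * adjoint (V j)).drop 1).prod
        + ∑ j ∈ Finset.univ.filter (fun j : Fin m => 0 < j.val),
            (V j * adjoint (V j))
              * ((List.ofFn fun k : Fin m => 1 - V k * adjoint (V k)).drop (j.val + 1)).prod)
      * (V ⟨0, hm⟩ * ((List.ofFn fun j : Fin m => 1 - V j * adjoint (V j)).drop 1).prod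
        + ∑ j ∈ Finset.univ.filter (fun j : Fin m => 0 < j.val),
            (V j * adjoint (V j))
              * ((List.ofFn fun k : Fin m => 1 - V k * adjoint (V k)).drop (j.val + 1)).prod)
      = 1 ∧
    (⨆ l : ℕ, LinearMap.range
        (((Sh (Fin.castLE hmn ⟨0, hm⟩) ^ l
          * (V ⟨0, hm⟩ * ((List.ofFn fun j : Fin m => 1 - V j * adjoint (V j)).drop 1).prod
            + ∑ j ∈ Finset.univ.filter (fun j : Fin m => 0 < j.val),
                (V j * adjoint (V j))
                  * ((List.ofFn fun k : Fin m => 1 - V k * adjoint (V k)).drop (j.val + 1)).prod)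
          : HardyH n →L[ℂ] HardyH n) : HardyH n →ₗ[ℂ] HardyH n))
      : Submodule ℂ (HardyH n)).topologicalClosure
      = ∑ i, LinearMap.range (V i : HardyH n →ₗ[ℂ] HardyH n) := by
  exact aux_blh hm V (Sh (Fin.castLE hmn ⟨0, hm⟩)) (fun i => (hV i).1) hVV hVVa
    (fun i => (hV i).2.1 (Fin.castLE hmn ⟨0, hm⟩))
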